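/- Let 𝔅 be a bornology on a topological space X with a closed base 𝔅₀, and suppose X is 𝔅-Lindelöf. If |𝔅₀| < 𝔯 (the reaping number), then X satisfies Split(𝒪_𝔅, 𝒪_𝔅): every open 𝔅-cover contains two disjoint subfamilies each of which is an open 𝔅-cover of X. -/

import Mathlib

open Set

universe u

def IsBornology {X : Type u} (B : Set (Set X)) : Prop :=
  ⋃₀ B = univ ∧ (∀ b ∈ B, ∀ b' ⊆ b, b' ∈ B) ∧ ∀ b ∈ B, ∀ b' ∈ B, b ∪ b' ∈ B

def HasClosedBase {X : Type u} [TopologicalSpace X] (B : Set (Set X)) : Prop :=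
  ∃ B0 ⊆ B, (∀ b ∈ B0, IsClosed b) ∧ ∀ b ∈ B, ∃ b0 ∈ B0, b ⊆ b0

def HasCompactBase {X : Type u} [TopologicalSpace X] (B : Set (Set X)) : Prop :=
  ∃ B0 ⊆ B, (∀ b ∈ B0, IsCompact b) ∧ ∀ b ∈ B, ∃ b0 ∈ B0, b ⊆ b0

def IsBCover {X : Type u} [TopologicalSpace X] (B U : Set (Set X)) : Prop :=
  (∀ u ∈ U, IsOpen u) ∧ univ ∉ U ∧ ∀ b ∈ B, ∃ u ∈ U, b ⊆ u

def IsGammaBCover {X : Type u} [TopologicalSpace X] (B U : Set (Set X)) : Prop :=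
  U.Infinite ∧ (∀ u ∈ U, IsOpen u ∧ u ≠ univ) ∧ ∀ b ∈ B, {u ∈ U | ¬ b ⊆ u}.Finite

def IsOpenCover {X : Type u} [TopologicalSpace X] (U : Set (Set X)) : Prop :=
  (∀ u ∈ U, IsOpen u) ∧ ⋃₀ U = univ

def IsOmegaCover {X : Type u} [TopologicalSpace X] (U : Set (Set X)) : Prop :=
  (∀ u ∈ U, IsOpen u) ∧ univ ∉ U ∧ ∀ F : Set X, F.Finite → ∃ u ∈ U, F ⊆ u

def IsGammaCover {X : Type u} [TopologicalSpace X] (U : Set (Set X)) : Prop :=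
  U.Infinite ∧ (∀ u ∈ U, IsOpen u) ∧ ∀ x : X, {u ∈ U | x ∉ u}.Finite

def BLindelof {X : Type u} [TopologicalSpace X] (B : Set (Set X)) : Prop :=
  ∀ U, IsBCover B U → ∃ V ⊆ U, V.Countable ∧ IsBCover B V

def S1 {X : Type u} (A C : Set (Set X) → Prop) : Prop :=
  ∀ U : ℕ → Set (Set X), (∀ n, A (U n)) →
    ∃ V : ℕ → Set X, (∀ n, V n ∈ U n) ∧ C (Set.range V)

def Sfin {X : Type u} (A C : Set (Set X) → Prop) : Prop :=
  ∀ U : ℕ → Set (Set X), (∀ n, A (U n)) →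
    ∃ V : ℕ → Set (Set X), (∀ n, (V n).Finite ∧ V n ⊆ U n) ∧ C (⋃ n, V n)

def Ufin {X : Type u} (A C : Set (Set X) → Prop) : Prop :=
  ∀ U : ℕ → Set (Set X), (∀ n, A (U n)) →
    ∃ V : ℕ → Set (Set X), (∀ n, (V n).Finite ∧ V n ⊆ U n) ∧
      ((∃ n, ⋃₀ V n = univ) ∨ C {s | ∃ n, s = ⋃₀ V n})
noncomputable def reapNum : Cardinal :=
  sInf {c | ∃ A : Set (Set ℕ), Cardinal.mk A = c ∧ (∀ a ∈ A, a.Infinite) ∧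
    ∀ R : Set ℕ, R.Infinite → ∃ P ∈ A, (P ∩ R).Finite ∨ (P \ R).Finite}

lemma bor_finite_mem {X : Type u} {B : Set (Set X)} (hB : IsBornology B)
    (hne : B.Nonempty) {F : Set X} (hF : F.Finite) : F ∈ B := by
  refine Set.Finite.induction_on F hF ?_ ?_
  · obtain ⟨b, hb⟩ := hne
    exact hB.2.1 b hb ∅ (empty_subset b)
  · intro x s hx hs ih
    have hxu : x ∈ ⋃₀ B := hB.1 ▸ mem_univ x
    obtain ⟨b, hbB, hxb⟩ := hxu
    have hsing : ({x} : Set X) ∈ B := hB.2.1 b hbB {x} (singleton_subset_iff.mpr hxb)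
    have := hB.2.2 {x} hsing s ih
    rwa [Set.singleton_union] at this

theorem stmt17 {X : Type u} [TopologicalSpace X] (B B0 : Set (Set X)) (hB : IsBornology B)
    (hsub : B0 ⊆ B) (hcl : ∀ b ∈ B0, IsClosed b) (hcof : ∀ b ∈ B, ∃ b0 ∈ B0, b ⊆ b0)
    (hL : BLindelof B) (hcard : Cardinal.mk B0 < Cardinal.lift.{u} reapNum) :
    ∀ U : Set (Set X), IsBCover B U →
      ∃ V1 V2 : Set (Set X), V1 ⊆ U ∧ V2 ⊆ U ∧ Disjoint V1 V2 ∧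
        IsBCover B V1 ∧ IsBCover B V2 := by
  intro U hU
  by_cases hX : IsEmpty X
  · refine ⟨∅, ∅, empty_subset _, empty_subset _, disjoint_bot_left, ?_, ?_⟩ <;>
    · refine ⟨fun u hu => hu.elim, notMem_empty _, fun b hb => ?_⟩
      obtain ⟨u, huU, _⟩ := hU.2.2 b hb
      exact absurd (Subsingleton.elim u univ) (fun h => hU.2.1 (h ▸ huU))
  · have hXne : Nonempty X := not_isEmpty_iff.mp hX
    obtain ⟨V, hVU, hVc, hV⟩ := hL U hU
    have hBne : B.Nonempty := by
      obtain ⟨x⟩ := hXne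
      obtain ⟨b, hbB, _⟩ : x ∈ ⋃₀ B := hB.1 ▸ mem_univ x
      exact ⟨b, hbB⟩
    -- choice of points outside proper sets
    have hxch : ∀ u : Set X, ∃ x : X, u ≠ univ → x ∉ u := by
      intro u
      by_cases h : u = univ
      · exact ⟨Classical.arbitrary X, fun h' => absurd h h'⟩
      · have hex : ∃ x, x ∉ u := by
          by_contra hc
          push_neg at hc
          exact h (eq_univ_of_forall hc)
        obtain ⟨x, hxu⟩ := hex
        exact ⟨x, fun _ => hxu⟩
    choose f hf using hxch
    -- each element of B is contained in infinitely many members of V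
    have hP : ∀ b ∈ B, {u ∈ V | b ⊆ u}.Infinite := by
      intro b hb
      by_contra h
      rw [Set.not_infinite] at h
      set F : Set X := f '' {u ∈ V | b ⊆ u} with hF
      have hFfin : F.Finite := h.image f
      have hFB : F ∈ B := bor_finite_mem hB hBne hFfin
      obtain ⟨u, huV, hbu⟩ := hV.2.2 (b ∪ F) (hB.2.2 b hb F hFB)
      have huP : u ∈ {u ∈ V | b ⊆ u} := ⟨huV, subset_union_left.trans hbu⟩
      have hfuF : f u ∈ F := mem_image_of_mem f huP
      have huniv : u ≠ univ := fun h' => hV.2.1 (h' ▸ huV)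
      exact hf u huniv (hbu (Or.inr hfuF))
    -- V is infinite
    obtain ⟨b, hbB⟩ := hBne
    have hVinf : V.Infinite := (hP b hbB).mono (sep_subset _ _)
    have : Countable ↥V := hVc.to_subtype
    have : Infinite ↥V := Set.infinite_coe_iff.mpr hVinf
    obtain ⟨d⟩ : Nonempty (Denumerable ↥V) :=
      nonempty_denumerable_iff.mpr ⟨inferInstance, inferInstance⟩
    let e : ↥V ≃ ℕ := @Denumerable.eqv _ d
    set g : ℕ → Set X := fun n => ((e.symm n : ↥V) : Set X) with hg
    have hginj : Function.Injective g := fun n m h => by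
      have := Subtype.coe_injective h
      exact e.symm.injective this
    have hgV : ∀ n, g n ∈ V := fun n => (e.symm n).2
    have hgrange : ∀ u ∈ V, ∃ n, g n = u := fun u hu => ⟨e ⟨u, hu⟩, by simp [hg]⟩
    set Q : ↥B0 → Set ℕ := fun b0 => {n | (b0 : Set X) ⊆ g n} with hQ
    have hQinf : ∀ b0 : ↥B0, (Q b0).Infinite := by
      intro b0
      have hpre : (g ⁻¹' {u ∈ V | (b0 : Set X) ⊆ u}).Infinite := by
        refine Set.Infinite.preimage (hP b0 (hsub b0.2)) ?_
        intro u hu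
        obtain ⟨n, hn⟩ := hgrange u hu.1
        exact ⟨n, hn⟩
      exact hpre.mono fun n hn => hn.2
    set A : Set (Set ℕ) := Set.range Q with hA
    have hR : ∃ R : Set ℕ, R.Infinite ∧
        ∀ P ∈ A, (P ∩ R).Infinite ∧ (P \ R).Infinite := by
      by_contra h
      push_neg at h
      have hAr : reapNum ≤ Cardinal.mk ↥A := by
        refine csInf_le' ⟨A, rfl, ?_, ?_⟩
        · rintro a ⟨b0, rfl⟩
          exact hQinf b0
        · intro R hRinf
          obtain ⟨P, hPA, hPn⟩ := h R hRinf
          by_cases h1 : (P ∩ R).Infinite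
          · exact ⟨P, hPA, Or.inr (hPn h1)⟩
          · exact ⟨P, hPA, Or.inl (Set.not_infinite.mp h1)⟩
      have hemb : Nonempty (↥A ↪ ↥B0) :=
        ⟨Function.Embedding.ofSurjective (Set.rangeFactorization Q)
          Set.rangeFactorization_surjective⟩
      have h2 : Cardinal.lift.{u} (Cardinal.mk ↥A) ≤ Cardinal.lift.{0} (Cardinal.mk ↥B0) :=
        Cardinal.lift_mk_le'.mpr hemb
      rw [Cardinal.lift_uzero] at h2
      exact absurd (le_trans (Cardinal.lift_le.mpr hAr) h2) (not_le.mpr hcard)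
    obtain ⟨R, hRinf, hReap⟩ := hR
    refine ⟨g '' R, g '' Rᶜ, ?_, ?_, ?_, ?_, ?_⟩
    · rintro u ⟨n, _, rfl⟩; exact hVU (hgV n)
    · rintro u ⟨n, _, rfl⟩; exact hVU (hgV n)
    · rw [Set.disjoint_left]
      rintro u ⟨n, hnR, rfl⟩ ⟨m, hmR, hmn⟩
      exact hmR (hginj hmn ▸ hnR)
    · refine ⟨?_, ?_, ?_⟩
      · rintro u ⟨n, _, rfl⟩
        exact hU.1 _ (hVU (hgV n))
      · rintro ⟨n, _, hn⟩; exact hU.2.1 (hn ▸ hVU (hgV n))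
      · intro b hb
        obtain ⟨b0, hb0, hbb0⟩ := hcof b hb
        obtain ⟨n, hnQ, hnR⟩ := (hReap (Q ⟨b0, hb0⟩) ⟨⟨b0, hb0⟩, rfl⟩).1.nonempty
        exact ⟨g n, mem_image_of_mem g hnR, hbb0.trans hnQ⟩
    · refine ⟨?_, ?_, ?_⟩
      · rintro u ⟨n, _, rfl⟩
        exact hU.1 _ (hVU (hgV n))
      · rintro ⟨n, _, hn⟩; exact hU.2.1 (hn ▸ hVU (hgV n))
      · intro b hb
        obtain ⟨b0, hb0, hbb0⟩ := hcof b hb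
        obtain ⟨n, hnQ, hnR⟩ := (hReap (Q ⟨b0, hb0⟩) ⟨⟨b0, hb0⟩, rfl⟩).2.nonempty
        exact ⟨g n, mem_image_of_mem g hnR, hbb0.trans hnQ⟩
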